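/- With ℋ_k as above, for all m ∈ ℬ^d and k ≥ d+1, |ℋ_k(m) − (k/2^{d+1}) Σ_{s ∈ ℬ^d} ⟨Xξ(s),ξ(s)⟩| ≤ C d ‖X‖, where C depends only on n. -/

import Mathlib

/-- The shift m|b on histories: drop the first symbol, append b. -/
def shift {d : ℕ} (m : Fin d → Bool) (b : Bool) : Fin d → Bool :=
  fun i => if h : (i : ℕ) + 1 < d then m ⟨(i : ℕ) + 1, h⟩ else b

/-- m|s : append the symbols of s one at a time to the history m. -/
def appendWord {d : ℕ} : {ℓ : ℕ} → (Fin d → Bool) → (Fin ℓ → Bool) → (Fin d → Bool)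
  | 0, m, _ => m
  | _+1, m, s => appendWord (shift m (s 0)) (fun i => s i.succ)

/-- The quadratic form ⟨Xv, v⟩. -/
noncomputable def quadip {n : ℕ} (X : Matrix (Fin n) (Fin n) ℝ) (v : Fin n → ℝ) : ℝ :=
  ∑ i, X.mulVec v i * v i

/-- ℋ_k(m), defined by ℋ_0 = 0 and
ℋ_k(m) = ½⟨Xξ(m),ξ(m)⟩ + ½(ℋ_{k-1}(m₊) + ℋ_{k-1}(m₋)). -/
noncomputable def H {n d : ℕ} (X : Matrix (Fin n) (Fin n) ℝ)
    (ξ : (Fin d → Bool) → Fin n → ℝ) : ℕ → (Fin d → Bool) → ℝ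
  | 0, _ => 0
  | k+1, m => (1/2) * quadip X (ξ m)
      + (1/2) * (H X ξ k (shift m true) + H X ξ k (shift m false))

/-- The Euclidean operator norm of a matrix. -/
noncomputable def opNorm {n : ℕ} (X : Matrix (Fin n) (Fin n) ℝ) : ℝ :=
  ‖(Matrix.toEuclideanCLM (𝕜 := ℝ) X : EuclideanSpace ℝ (Fin n) →L[ℝ] EuclideanSpace ℝ (Fin n))‖

/-- The increment `D k m = H (k+1) m - H k m`. -/
noncomputable def D {n d : ℕ} (X : Matrix (Fin n) (Fin n) ℝ)
    (ξ : (Fin d → Bool) → Fin n → ℝ) (k : ℕ) (m : Fin d → Bool) : ℝ :=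
  H X ξ (k+1) m - H X ξ k m

section aux

variable {n d : ℕ} (X : Matrix (Fin n) (Fin n) ℝ) (ξ : (Fin d → Bool) → Fin n → ℝ)

lemma D_zero (m : Fin d → Bool) : D X ξ 0 m = (1/2) * quadip X (ξ m) := by
  simp [D, H]

lemma D_succ (k : ℕ) (m : Fin d → Bool) :
    D X ξ (k+1) m = (1/2) * (D X ξ k (shift m true) + D X ξ k (shift m false)) := by
  simp only [D, H]
  ring

lemma D_agree (k : ℕ) (m m' : Fin d → Bool)
    (h : ∀ i : Fin d, k ≤ (i : ℕ) → m i = m' i) : D X ξ k m = D X ξ k m' := by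
  induction k generalizing m m' with
  | zero =>
    have : m = m' := funext fun i => h i (Nat.zero_le _)
    rw [this]
  | succ k ih =>
    rw [D_succ, D_succ]
    have key : ∀ b, D X ξ k (shift m b) = D X ξ k (shift m' b) := by
      intro b
      apply ih
      intro i hi
      unfold shift
      split
      · next hlt => exact h ⟨(i:ℕ)+1, hlt⟩ (by simpa using Nat.succ_le_succ hi)
      · rfl
    rw [key true, key false]

lemma D_const (k : ℕ) (hk : d ≤ k) (m m' : Fin d → Bool) :
    D X ξ k m = D X ξ k m' := by
  apply D_agree
  intro i hi
  exact absurd (lt_of_lt_of_le i.isLt (hk.trans hi)) (lt_irrefl _)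

/-- The sum of `D k` over all histories is invariant in `k`. -/
lemma D_sum (k : ℕ) :
    ∑ m : Fin d → Bool, D X ξ k m = ∑ m : Fin d → Bool, D X ξ 0 m := by
  induction k with
  | zero => rfl
  | succ k ih =>
    rw [← ih]
    have key : ∑ p : (Fin d → Bool) × Bool, D X ξ k (shift p.1 p.2)
        = 2 * ∑ m : Fin d → Bool, D X ξ k m := by
      rcases Nat.eq_zero_or_pos d with hd | hd
      · subst hd
        have : ∀ p : (Fin 0 → Bool) × Bool, shift p.1 p.2 = p.1 := by
          intro p; funext i; exact absurd i.isLt (by omega)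
        simp only [this, Fintype.sum_prod_type]
        simp [two_mul, Finset.sum_add_distrib]
      · -- the map (m, b) ↦ (shift m b, m 0) is a bijection
        set e : (Fin d → Bool) × Bool → (Fin d → Bool) × Bool :=
          fun p => (shift p.1 p.2, p.1 ⟨0, hd⟩) with he
        have hinj : Function.Injective e := by
          rintro ⟨m, b⟩ ⟨m', b'⟩ hpe
          simp only [he, Prod.mk.injEq] at hpe
          obtain ⟨hsh, h0⟩ := hpe
          have hsh' : ∀ i : Fin d, shift m b i = shift m' b' i :=
            fun i => congrFun hsh i
          have hb : b = b' := by
            have h := hsh' ⟨d-1, by omega⟩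
            unfold shift at h
            rw [dif_neg (by simp only [Fin.val_mk]; omega),
              dif_neg (by simp only [Fin.val_mk]; omega)] at h
            exact h
          have hm : m = m' := by
            funext i
            rcases Nat.eq_zero_or_pos (i:ℕ) with hz | hz
            · have : i = ⟨0, hd⟩ := Fin.ext hz
              rw [this]; exact h0
            · have hi1 : (i:ℕ) - 1 + 1 < d := by have := i.isLt; omega
              have h := hsh' ⟨(i:ℕ)-1, by omega⟩
              unfold shift at h
              rw [dif_pos hi1, dif_pos hi1] at h
              have hii : (⟨(i:ℕ)-1+1, hi1⟩ : Fin d) = i := by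
                apply Fin.ext; simp only [Fin.val_mk]; omega
              rwa [hii] at h
          rw [hm, hb]
        have hbij : Function.Bijective e := Finite.injective_iff_bijective.mp hinj
        calc ∑ p : (Fin d → Bool) × Bool, D X ξ k (shift p.1 p.2)
            = ∑ p : (Fin d → Bool) × Bool, D X ξ k (e p).1 := rfl
          _ = ∑ q : (Fin d → Bool) × Bool, D X ξ k q.1 :=
              Fintype.sum_bijective e hbij _ _ (fun _ => rfl)
          _ = 2 * ∑ m : Fin d → Bool, D X ξ k m := by
              rw [Fintype.sum_prod_type]; simp [two_mul, Finset.sum_add_distrib]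
    calc ∑ m : Fin d → Bool, D X ξ (k+1) m
        = ∑ m : Fin d → Bool, (1/2) * (D X ξ k (shift m true) + D X ξ k (shift m false)) := by
          simp_rw [D_succ]
      _ = (1/2) * ∑ p : (Fin d → Bool) × Bool, D X ξ k (shift p.1 p.2) := by
          rw [Fintype.sum_prod_type, Finset.mul_sum]
          exact Finset.sum_congr rfl fun m _ => by rw [Fintype.sum_bool]
      _ = ∑ m : Fin d → Bool, D X ξ k m := by rw [key]; ring

/-- For `k ≥ d`, `D k m` equals the average `2^{-(d+1)} Σ_s Q(s)`. -/
lemma D_val (k : ℕ) (hk : d ≤ k) (m : Fin d → Bool) :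
    D X ξ k m = (1 / 2^(d+1)) * ∑ s : Fin d → Bool, quadip X (ξ s) := by
  have hsum : ∑ m' : Fin d → Bool, D X ξ k m' = (2:ℝ)^d * D X ξ k m := by
    rw [Finset.sum_congr rfl (fun m' _ => D_const X ξ k hk m' m)]
    simp [Finset.sum_const, Finset.card_univ, mul_comm]
  have h0 : ∑ m' : Fin d → Bool, D X ξ 0 m'
      = (1/2) * ∑ s : Fin d → Bool, quadip X (ξ s) := by
    simp_rw [D_zero, Finset.mul_sum]
  have := (D_sum X ξ k).symm.trans hsum
  rw [h0] at this
  have h2 : (2:ℝ)^d ≠ 0 := by positivity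
  field_simp at this ⊢
  rw [pow_succ]
  linarith [this]

lemma quadip_bound (v : Fin n → ℝ) :
    |quadip X v| ≤ opNorm X * ∑ i, (v i)^2 := by
  set u : EuclideanSpace ℝ (Fin n) := (WithLp.equiv 2 _).symm v with hu
  have h1 : quadip X v
      = inner (𝕜 := ℝ) ((Matrix.toEuclideanCLM (𝕜 := ℝ) X) u) u := by
    rw [hu, WithLp.equiv_symm_apply, Matrix.toEuclideanCLM_toLp]
    simp only [quadip, PiLp.inner_apply, RCLike.inner_apply, starRingEnd_apply]
    apply Finset.sum_congr rfl
    intro i _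
    simp [PiLp.toLp_apply, mul_comm]
  have h2 : ‖u‖ * ‖u‖ = ∑ i, (v i)^2 := by
    have : ‖u‖ = Real.sqrt (∑ i, (v i)^2) := by
      rw [EuclideanSpace.norm_eq]
      congr 1
      apply Finset.sum_congr rfl
      intro i _
      rw [hu]
      simp [PiLp.toLp_apply, sq_abs]
    rw [this, Real.mul_self_sqrt (Finset.sum_nonneg fun i _ => sq_nonneg _)]
  rw [h1]
  calc |inner (𝕜 := ℝ) ((Matrix.toEuclideanCLM (𝕜 := ℝ) X) u) u|
      ≤ ‖(Matrix.toEuclideanCLM (𝕜 := ℝ) X) u‖ * ‖u‖ := by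
        exact abs_real_inner_le_norm _ _
    _ ≤ (opNorm X * ‖u‖) * ‖u‖ := by
        apply mul_le_mul_of_nonneg_right _ (norm_nonneg _)
        exact ContinuousLinearMap.le_opNorm _ _
    _ = opNorm X * ∑ i, (v i)^2 := by rw [mul_assoc, h2]

lemma D_bound (hξ : ∀ m, ∑ i, (ξ m i)^2 ≤ 4 * n) (k : ℕ) (m : Fin d → Bool) :
    |D X ξ k m| ≤ 2 * n * opNorm X := by
  induction k generalizing m with
  | zero =>
    rw [D_zero, abs_mul]
    have h1 : |quadip X (ξ m)| ≤ opNorm X * (4 * n) := by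
      refine (quadip_bound X (ξ m)).trans ?_
      exact mul_le_mul_of_nonneg_left (hξ m) (norm_nonneg _)
    rw [abs_of_pos (by norm_num : (0:ℝ) < 1/2)]
    nlinarith [norm_nonneg ((Matrix.toEuclideanCLM (𝕜 := ℝ) X :
      EuclideanSpace ℝ (Fin n) →L[ℝ] EuclideanSpace ℝ (Fin n)))]
  | succ k ih =>
    rw [D_succ]
    have h1 := ih (shift m true)
    have h2 := ih (shift m false)
    calc |(1/2) * (D X ξ k (shift m true) + D X ξ k (shift m false))|
        ≤ (1/2) * (|D X ξ k (shift m true)| + |D X ξ k (shift m false)|) := by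
          rw [abs_mul, abs_of_pos (by norm_num : (0:ℝ) < 1/2)]
          exact mul_le_mul_of_nonneg_left (abs_add_le _ _) (by norm_num)
      _ ≤ 2 * n * opNorm X := by linarith

lemma H_eq_sum_D (k : ℕ) (m : Fin d → Bool) :
    H X ξ k m = ∑ j ∈ Finset.range k, D X ξ j m := by
  induction k with
  | zero => simp [H]
  | succ k ih => rw [Finset.sum_range_succ, ← ih, D]; ring

end aux

/-- for any ξ with |ξ(m)| ≤ 2√n, and all k ≥ d+1,
|ℋ_k(m) − (k/2^{d+1}) Σ_{s ∈ ℬ^d} ⟨Xξ(s),ξ(s)⟩| ≤ C d ‖X‖, with C depending only on n. -/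
theorem stmt6 (n : ℕ) :
    ∃ C : ℝ, 0 < C ∧
      ∀ (d : ℕ) (X : Matrix (Fin n) (Fin n) ℝ), X.IsSymm →
      ∀ ξ : (Fin d → Bool) → Fin n → ℝ,
        (∀ m, Real.sqrt (∑ i, (ξ m i)^2) ≤ 2 * Real.sqrt n) →
      ∀ k : ℕ, d + 1 ≤ k → ∀ m : Fin d → Bool,
        |H X ξ k m - ((k : ℝ) / 2^(d+1)) * ∑ s : Fin d → Bool, quadip X (ξ s)|
          ≤ C * d * opNorm X := by
  refine ⟨4 * n + 1, by positivity, ?_⟩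
  intro d X _hsymm ξ hξ k hk m
  -- translate the hypothesis on ξ
  have hξ' : ∀ m, ∑ i, (ξ m i)^2 ≤ 4 * n := by
    intro m
    have h0 : (0:ℝ) ≤ ∑ i, (ξ m i)^2 := Finset.sum_nonneg fun i _ => sq_nonneg _
    have := hξ m
    nlinarith [Real.sq_sqrt h0, Real.sq_sqrt (Nat.cast_nonneg (α := ℝ) n),
      Real.sqrt_nonneg (∑ i, (ξ m i)^2), Real.sqrt_nonneg ((n:ℝ))]
  set A : ℝ := (1 / 2^(d+1)) * ∑ s : Fin d → Bool, quadip X (ξ s) with hA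
  have hAval : A = D X ξ d m := (D_val X ξ d le_rfl m).symm
  have hAbound : |A| ≤ 2 * n * opNorm X := hAval ▸ D_bound X ξ hξ' d m
  have hdk : d ≤ k := le_trans (Nat.le_succ d) hk
  have key : H X ξ k m - ((k : ℝ) / 2^(d+1)) * ∑ s : Fin d → Bool, quadip X (ξ s)
      = ∑ j ∈ Finset.range d, (D X ξ j m - A) := by
    have hkA : ((k : ℝ) / 2^(d+1)) * ∑ s : Fin d → Bool, quadip X (ξ s) = k * A := by
      rw [hA]; ring
    rw [hkA, H_eq_sum_D]
    have hsplit : ∑ j ∈ Finset.range k, D X ξ j m - (k : ℝ) * A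
        = ∑ j ∈ Finset.range k, (D X ξ j m - A) := by
      rw [Finset.sum_sub_distrib, Finset.sum_const, Finset.card_range]
      simp [nsmul_eq_mul]
    rw [hsplit]
    symm
    apply Finset.sum_subset (Finset.range_subset_range.mpr hdk)
    intro j _ hj
    have hdj : d ≤ j := by
      simp only [Finset.mem_range, not_lt] at hj
      exact hj
    rw [D_val X ξ j hdj m, ← hA, sub_self]
  rw [key]
  calc |∑ j ∈ Finset.range d, (D X ξ j m - A)|
      ≤ ∑ j ∈ Finset.range d, |D X ξ j m - A| := Finset.abs_sum_le_sum_abs _ _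
    _ ≤ ∑ j ∈ Finset.range d, (4 * n * opNorm X) := by
        apply Finset.sum_le_sum
        intro j _
        have := D_bound X ξ hξ' j m
        have habs := abs_sub_abs_le_abs_sub (D X ξ j m) A
        calc |D X ξ j m - A| ≤ |D X ξ j m| + |A| := abs_sub _ _
          _ ≤ 4 * n * opNorm X := by linarith
    _ = 4 * n * opNorm X * d := by
        rw [Finset.sum_const, Finset.card_range, nsmul_eq_mul]; ring
    _ ≤ (4 * n + 1) * d * opNorm X := by
        have h1 : (0:ℝ) ≤ opNorm X := norm_nonneg _
        nlinarith [Nat.cast_nonneg (α := ℝ) d]
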